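/- arXiv:2107.13444 — 2 statements merged into one kernel-verified Lean document; each statement's English description precedes it below -/
import Mathlib

section
/- Let n, N ≥ 1, let C ∈ ℝ^{n×n} be symmetric positive semidefinite, and for each i = 1,…,N let g_i : ℝ^n → ℝ be convex and differentiable. Define, for u = (u_1,…,u_N) ∈ (ℝ^n)^N, the cost J_i(u) = g_i(u_i) + ⟨C · (1/N)∑_{j=1}^N u_j, u_i⟩, whose gradient with respect to u_i is F_i(u) = ∇g_i(u_i) + (1/N) C ∑_{j=1}^N u_j + (1/N) C u_i. Then the pseudo-gradient map F = (F_1,…,F_N) : (ℝ^n)^N → (ℝ^n)^N is monotone, i.e., for all x, y ∈ (ℝ^n)^N, ∑_{i=1}^N ⟨F_i(x) − F_i(y), x_i − y_i⟩ ≥ 0. -/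
open scoped RealInnerProductSpace


/-- Monotone gradient of a convex differentiable function. -/
lemma gradient_monotone_of_convexOn {E : Type*} [NormedAddCommGroup E]
    [InnerProductSpace ℝ E] [CompleteSpace E]
    (g : E → ℝ) (hc : ConvexOn ℝ Set.univ g) (hd : Differentiable ℝ g) (x y : E) :
    0 ≤ ⟪gradient g x - gradient g y, x - y⟫ := by
  set L : ℝ →ᵃ[ℝ] E := AffineMap.lineMap y x with hL
  have hLa : ∀ t : ℝ, L t = y + t • (x - y) := by
    intro t
    simp [hL, AffineMap.lineMap_apply]
    abel
  have hline : ∀ t : ℝ, HasDerivAt (fun t : ℝ => L t) (x - y) t := by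
    intro t
    simp only [hLa]
    simpa using ((hasDerivAt_id t).smul_const (x - y)).const_add y
  have hderiv : ∀ t : ℝ, HasDerivAt (fun t => g (L t)) ⟪gradient g (L t), x - y⟫ t := by
    intro t
    have hg : HasFDerivAt g (InnerProductSpace.toDual ℝ E (gradient g (L t))) (L t) :=
      (hd (L t)).hasGradientAt
    exact hg.comp_hasDerivAt t (hline t)
  have hconv : ConvexOn ℝ Set.univ (fun t => g (L t)) := by
    have := hc.comp_affineMap L
    exact this
  have hmono := hconv.monotoneOn_deriv (fun t _ => (hderiv t).differentiableAt)
  have h01 := hmono (Set.mem_univ (0 : ℝ)) (Set.mem_univ (1 : ℝ)) (by norm_num)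
  rw [(hderiv 0).deriv, (hderiv 1).deriv] at h01
  have hL0 : L 0 = y := by simp [hLa]
  have hL1 : L 1 = x := by simp [hLa]
  rw [hL0, hL1] at h01
  rw [inner_sub_left]
  linarith

lemma psd_inner_nonneg {n : ℕ} {C : Matrix (Fin n) (Fin n) ℝ} (hC : C.PosSemidef)
    (v : EuclideanSpace ℝ (Fin n)) : 0 ≤ ⟪Matrix.toEuclideanLin C v, v⟫ := by
  have h := hC.dotProduct_mulVec_nonneg ((WithLp.equiv 2 (Fin n → ℝ)) v)
  simpa [Matrix.toEuclideanLin_apply, PiLp.inner_apply, dotProduct,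
    mul_comm] using h

/-- Monotonicity of the pseudo-gradient of an aggregative game whose cost
functions are `J_i(u) = g_i(u_i) + ⟨C · avg(u), u_i⟩` with `C` symmetric
positive semidefinite and `g_i` convex and differentiable; the gradient of
`J_i` with respect to `u_i` is
`F_i(u) = ∇g_i(u_i) + (1/N) C ∑_j u_j + (1/N) C u_i`. -/
theorem aggregative_pseudogradient_monotone
    (n N : ℕ) (hn : 1 ≤ n) (hN : 1 ≤ N)
    (C : Matrix (Fin n) (Fin n) ℝ) (hC : C.PosSemidef)
    (g : Fin N → EuclideanSpace ℝ (Fin n) → ℝ)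
    (hgcvx : ∀ i, ConvexOn ℝ Set.univ (g i))
    (hgdiff : ∀ i, Differentiable ℝ (g i))
    (F : (Fin N → EuclideanSpace ℝ (Fin n)) → Fin N → EuclideanSpace ℝ (Fin n))
    (hF : ∀ u i, F u i = gradient (g i) (u i)
      + (N : ℝ)⁻¹ • Matrix.toEuclideanLin C (∑ j, u j)
      + (N : ℝ)⁻¹ • Matrix.toEuclideanLin C (u i)) :
    ∀ x y : Fin N → EuclideanSpace ℝ (Fin n),
      0 ≤ ∑ i, ⟪F x i - F y i, x i - y i⟫ := by
  intro x y
  have key : ∀ i, F x i - F y i =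
      (gradient (g i) (x i) - gradient (g i) (y i))
      + (N : ℝ)⁻¹ • Matrix.toEuclideanLin C (∑ j, x j - ∑ j, y j)
      + (N : ℝ)⁻¹ • Matrix.toEuclideanLin C (x i - y i) := by
    intro i
    rw [hF, hF, map_sub, map_sub, smul_sub, smul_sub]
    abel
  have hsum : ∀ i, ⟪F x i - F y i, x i - y i⟫ =
      ⟪gradient (g i) (x i) - gradient (g i) (y i), x i - y i⟫
      + (N : ℝ)⁻¹ * ⟪Matrix.toEuclideanLin C (∑ j, x j - ∑ j, y j), x i - y i⟫
      + (N : ℝ)⁻¹ * ⟪Matrix.toEuclideanLin C (x i - y i), x i - y i⟫ := by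
    intro i
    rw [key i, inner_add_left, inner_add_left, real_inner_smul_left, real_inner_smul_left]
  rw [Finset.sum_congr rfl fun i _ => hsum i, Finset.sum_add_distrib,
    Finset.sum_add_distrib]
  have h1 : 0 ≤ ∑ i, ⟪gradient (g i) (x i) - gradient (g i) (y i), x i - y i⟫ :=
    Finset.sum_nonneg fun i _ =>
      gradient_monotone_of_convexOn (g i) (hgcvx i) (hgdiff i) (x i) (y i)
  have h2 : 0 ≤ ∑ i, (N : ℝ)⁻¹ *
      ⟪Matrix.toEuclideanLin C (∑ j, x j - ∑ j, y j), x i - y i⟫ := by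
    rw [← Finset.mul_sum, ← inner_sum]
    have hd : ∑ i, (x i - y i) = ∑ j, x j - ∑ j, y j := Finset.sum_sub_distrib _ _
    rw [hd]
    exact mul_nonneg (by positivity) (psd_inner_nonneg hC _)
  have h3 : 0 ≤ ∑ i, (N : ℝ)⁻¹ *
      ⟪Matrix.toEuclideanLin C (x i - y i), x i - y i⟫ :=
    Finset.sum_nonneg fun i _ =>
      mul_nonneg (by positivity) (psd_inner_nonneg hC (x i - y i))
  linarith
end

section
/- Let H, N ≥ 1, let d ∈ ℝ^H with d_h ≥ 0 for all h, let b ∈ ℝ^H, and let D = diag(d₁,…,d_H). For (p_1,…,p_N) ∈ (ℝ^H)^N, define F_i(p_1,…,p_N) = D(∑_{j=1}^N p_j + b) + D p_i, which is the gradient with respect to p_i of the grid-trading cost f_i^{mg}(p_i, σ) = ∑_{h=1}^H d_h (σ_h + b_h) p_{i,h} with σ = ∑_{j=1}^N p_j. Then the map (p_1,…,p_N) ↦ (F_1,…,F_N) is monotone: for all p, q ∈ (ℝ^H)^N, ∑_{i=1}^N ⟨F_i(p) − F_i(q), p_i − q_i⟩ ≥ 0. -/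
open scoped RealInnerProductSpace

/-- Monotonicity of the pseudo-gradient of the grid-trading costs
`f_i^{mg}(p_i, σ) = ∑_h d_h (σ_h + b_h) p_{i,h}` with `σ = ∑_j p_j`,
whose gradient in `p_i` is `F_i(p) = D(∑_j p_j + b) + D p_i`, `D = diag(d)`. -/
theorem grid_trading_pseudogradient_monotone
    (H N : ℕ) (hH : 1 ≤ H) (hN : 1 ≤ N)
    (d : Fin H → ℝ) (hd : ∀ h, 0 ≤ d h)
    (b : EuclideanSpace ℝ (Fin H))
    (F : (Fin N → EuclideanSpace ℝ (Fin H)) → Fin N → EuclideanSpace ℝ (Fin H))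
    (hF : ∀ p i, F p i =
      Matrix.toEuclideanLin (Matrix.diagonal d) ((∑ j, p j) + b)
      + Matrix.toEuclideanLin (Matrix.diagonal d) (p i)) :
    ∀ p q : Fin N → EuclideanSpace ℝ (Fin H),
      0 ≤ ∑ i, ⟪F p i - F q i, p i - q i⟫ := by
  intro p q
  set D := Matrix.toEuclideanLin (Matrix.diagonal d) with hDdef
  set u : Fin N → EuclideanSpace ℝ (Fin H) := fun i => p i - q i with hu
  have hD : ∀ x : EuclideanSpace ℝ (Fin H), 0 ≤ ⟪D x, x⟫ := by
    intro x
    rw [PiLp.inner_apply]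
    apply Finset.sum_nonneg
    intro h _
    have hx : (D x) h = d h * x h := by
      simp [hDdef, Matrix.toEuclideanLin_apply, Matrix.mulVec_diagonal]
    simp only [RCLike.inner_apply, conj_trivial, hx, mul_assoc]
    nlinarith [mul_nonneg (hd h) (mul_self_nonneg (x h))]
  have hFd : ∀ i, F p i - F q i = D (∑ j, u j) + D (u i) := by
    intro i
    rw [hF, hF]
    have hsum : ((∑ j, p j) + b) - ((∑ j, q j) + b) = ∑ j, u j := by
      simp [hu, Finset.sum_sub_distrib]
    rw [show ∀ a b c e : EuclideanSpace ℝ (Fin H), (D a + D b) - (D c + D e)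
        = D (a - c) + D (b - e) from fun a b c e => by rw [map_sub, map_sub]; abel,
      hsum]
  calc (0:ℝ) ≤ ⟪D (∑ j, u j), ∑ j, u j⟫ + ∑ i, ⟪D (u i), u i⟫ :=
        add_nonneg (hD _) (Finset.sum_nonneg fun i _ => hD _)
    _ = ∑ i, ⟪F p i - F q i, p i - q i⟫ := by
        simp only [hFd, inner_add_left]
        rw [Finset.sum_add_distrib, inner_sum]
end
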